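/- If the stepsize satisfies α ≤ β_k ≤ B(r) where B(r) = (1/(2a_max)) (1/(2a_min²) + 16ȳ²/r²)^{-1}, and ‖b(k) - b*‖ ≥ r, then combining the angle bound and the consecutive-distance bound yields the contraction ‖b(k+1) - b*‖² ≤ (1 - β_k/(2 a_max)) ‖b(k) - b*‖². -/

import Mathlib

lemma bid_aux (amin amax ybar r β X : ℝ)
    (hamin : 0 < amin) (hle : amin ≤ amax) (hybar : 0 ≤ ybar) (hr : 0 < r)
    (hβ : 0 < β)
    (hβB : β ≤ (1 / (2 * amax)) * (1 / (2 * amin ^ 2) + 16 * ybar ^ 2 / r ^ 2)⁻¹)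
    (hX : r ^ 2 ≤ X) :
    (β ^ 2 / (2 * amin ^ 2)) * X + 8 * β ^ 2 * ybar ^ 2 ≤ β / (2 * amax) * X := by
  have hamax : 0 < amax := lt_of_lt_of_le hamin hle
  set C : ℝ := 1 / (2 * amin ^ 2) + 16 * ybar ^ 2 / r ^ 2 with hCdef
  have hC : 0 < C := by positivity
  have h1 : β * C ≤ 1 / (2 * amax) := by
    have := mul_le_mul_of_nonneg_right hβB hC.le
    rwa [mul_assoc, inv_mul_cancel₀ hC.ne', mul_one] at this
  -- β² C X ≤ β X / (2 amax)
  have hXpos : 0 < X := lt_of_lt_of_le (by positivity) hX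
  have h2 : β * (β * C) * X ≤ β * (1 / (2 * amax)) * X := by
    have := mul_le_mul_of_nonneg_right (mul_le_mul_of_nonneg_left h1 hβ.le) hXpos.le
    linarith
  have h3 : (β ^ 2 / (2 * amin ^ 2)) * X + 8 * β ^ 2 * ybar ^ 2 ≤ β * (β * C) * X := by
    have hr2 : 0 < r ^ 2 := by positivity
    have h4 : 8 * β ^ 2 * ybar ^ 2 ≤ 8 * β ^ 2 * ybar ^ 2 * (X / r ^ 2) := by
      have : (1 : ℝ) ≤ X / r ^ 2 := (one_le_div hr2).2 hX
      nlinarith [sq_nonneg β, sq_nonneg ybar, mul_nonneg (mul_nonneg (by norm_num : (0:ℝ) ≤ 8) (sq_nonneg β)) (sq_nonneg ybar)]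
    have hexp : β * (β * C) * X = (β ^ 2 / (2 * amin ^ 2)) * X + 16 * β ^ 2 * ybar ^ 2 * (X / r ^ 2) := by
      field_simp [hCdef]; rw [hCdef]; field_simp
    rw [hexp]
    nlinarith [mul_nonneg (mul_nonneg (mul_nonneg (by norm_num : (0:ℝ) ≤ 8) (sq_nonneg β)) (sq_nonneg ybar)) (div_nonneg hXpos.le hr2.le)]
  calc (β ^ 2 / (2 * amin ^ 2)) * X + 8 * β ^ 2 * ybar ^ 2 ≤ β * (β * C) * X := h3
    _ ≤ β * (1 / (2 * amax)) * X := h2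
    _ = β / (2 * amax) * X := by ring

/-- Contraction step: if `α ≤ β ≤ B(r)` with
`B(r) = (1/(2 a_max)) (1/(2 a_min²) + 16 ȳ²/r²)⁻¹`, and `‖b(k) - b*‖ ≥ r`, then combining
the angle bound and the consecutive-distance bound yields
`‖b(k+1) - b*‖² ≤ (1 - β/(2 a_max)) ‖b(k) - b*‖²`. -/
theorem bid_update_contraction (N : ℕ) (amin amax ybar r α β : ℝ)
    (hamin : 0 < amin) (hle : amin ≤ amax) (hybar : 0 ≤ ybar) (hr : 0 < r)
    (hα : 0 < α) (hαβ : α ≤ β)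
    (hβB : β ≤ (1 / (2 * amax)) * (1 / (2 * amin ^ 2) + 16 * ybar ^ 2 / r ^ 2)⁻¹)
    (b b' bstar : EuclideanSpace ℝ (Fin N))
    (hangle : (β / (2 * amax)) * ‖b - bstar‖ ^ 2 ≤ (inner ℝ (b' - b) (bstar - b) : ℝ))
    (hdist : ‖b' - b‖ ^ 2 ≤ (β ^ 2 / (2 * amin ^ 2)) * ‖b - bstar‖ ^ 2
      + 8 * β ^ 2 * ybar ^ 2)
    (hfar : r ≤ ‖b - bstar‖) :
    ‖b' - bstar‖ ^ 2 ≤ (1 - β / (2 * amax)) * ‖b - bstar‖ ^ 2 := by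
  have hβ : 0 < β := lt_of_lt_of_le hα hαβ
  have hid : ‖b' - bstar‖ ^ 2
      = ‖b' - b‖ ^ 2 - 2 * (inner ℝ (b' - b) (bstar - b) : ℝ) + ‖b - bstar‖ ^ 2 := by
    have h1 : b' - bstar = (b' - b) - (bstar - b) := by abel
    rw [h1, norm_sub_sq_real, norm_sub_rev bstar b]
  have hX : r ^ 2 ≤ ‖b - bstar‖ ^ 2 := by
    have := norm_nonneg (b - bstar)
    nlinarith
  have key := bid_aux amin amax ybar r β (‖b - bstar‖ ^ 2) hamin hle hybar hr hβ hβB hX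
  rw [hid]
  nlinarith [hangle, hdist]
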